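/- Let n, s ≥ 0 be integers, a < b real numbers, and a < τ_1 < … < τ_n < b. Set ω(t) = (b−t)^s ∏_{k=1}^n (τ_k−t)^2, and for an integer m ≥ 0 let Ω_m(t) = Σ_{ℓ=0}^m (t−a)^ℓ (1/ω)^{(ℓ)}(a)/ℓ! denote the m-th partial sum of the Taylor expansion of 1/ω at t = a. Then Ω_m(t) > 0 for every t ∈ [a, b]. -/

import Mathlib

/-- A cone of functions: generated by `u ↦ (c - u)⁻¹` for `c ≥ c₀`, nonnegative constants,
sums and products. All its members have all iterated derivatives nonnegative on `Iio c₀`. -/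
inductive TaylorCone (c₀ : ℝ) : (ℝ → ℝ) → Prop
  | base {c : ℝ} (hc : c₀ ≤ c) : TaylorCone c₀ (fun u => (c - u)⁻¹)
  | const {r : ℝ} (hr : 0 ≤ r) : TaylorCone c₀ (fun _ => r)
  | add {f g : ℝ → ℝ} : TaylorCone c₀ f → TaylorCone c₀ g → TaylorCone c₀ (f + g)
  | mul {f g : ℝ → ℝ} : TaylorCone c₀ f → TaylorCone c₀ g → TaylorCone c₀ (f * g)

theorem TaylorCone.nonneg {c₀ : ℝ} {f : ℝ → ℝ} (hf : TaylorCone c₀ f) :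
    ∀ x < c₀, 0 ≤ f x := by
  induction hf with
  | base hc => intro x hx; exact inv_nonneg.2 (by linarith)
  | const hr => intro x _; exact hr
  | add hf hg ihf ihg => intro x hx; exact add_nonneg (ihf x hx) (ihg x hx)
  | mul hf hg ihf ihg => intro x hx; exact mul_nonneg (ihf x hx) (ihg x hx)

theorem TaylorCone.derivMem {c₀ : ℝ} {f : ℝ → ℝ} (hf : TaylorCone c₀ f) :
    ∃ h : ℝ → ℝ, TaylorCone c₀ h ∧
      ∀ x < c₀, DifferentiableAt ℝ f x ∧ _root_.deriv f x = h x := by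
  induction hf with
  | @base c hc =>
      refine ⟨(fun u => (c - u)⁻¹) * (fun u => (c - u)⁻¹),
        TaylorCone.mul (TaylorCone.base hc) (TaylorCone.base hc), fun x hx => ?_⟩
      have hne : c - x ≠ 0 := by intro h; nlinarith
      have h1 : HasDerivAt (fun u : ℝ => c - u) (-1) x := by
        simpa using (hasDerivAt_id x).const_sub c
      have h2 : HasDerivAt (fun u : ℝ => (c - u)⁻¹) (-(-1) / (c - x) ^ 2) x := h1.inv hne
      refine ⟨h2.differentiableAt, ?_⟩
      rw [h2.deriv]
      simp [Pi.mul_apply]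
      field_simp
  | const hr =>
      exact ⟨fun _ => 0, TaylorCone.const le_rfl, fun x _ =>
        ⟨differentiableAt_const _, by simp⟩⟩
  | @add f g hf hg ihf ihg =>
      obtain ⟨hF, hFc, hFp⟩ := ihf
      obtain ⟨hG, hGc, hGp⟩ := ihg
      refine ⟨hF + hG, TaylorCone.add hFc hGc, fun x hx => ?_⟩
      obtain ⟨hfd, hfe⟩ := hFp x hx
      obtain ⟨hgd, hge⟩ := hGp x hx
      refine ⟨hfd.add hgd, ?_⟩
      have : _root_.deriv (fun y => f y + g y) x = _root_.deriv f x + _root_.deriv g x := deriv_add hfd hgd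
      rw [show f + g = fun y => f y + g y from rfl]
      simpa [Pi.add_apply, hfe, hge] using this
  | @mul f g hf hg ihf ihg =>
      obtain ⟨hF, hFc, hFp⟩ := ihf
      obtain ⟨hG, hGc, hGp⟩ := ihg
      refine ⟨hF * g + f * hG, TaylorCone.add (TaylorCone.mul hFc hg) (TaylorCone.mul hf hGc),
        fun x hx => ?_⟩
      obtain ⟨hfd, hfe⟩ := hFp x hx
      obtain ⟨hgd, hge⟩ := hGp x hx
      refine ⟨hfd.mul hgd, ?_⟩
      have : _root_.deriv (fun y => f y * g y) x = _root_.deriv f x * g x + f x * _root_.deriv g x :=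
        deriv_mul hfd hgd
      rw [show f * g = fun y => f y * g y from rfl]
      simpa [Pi.add_apply, Pi.mul_apply, hfe, hge] using this

theorem TaylorCone.iteratedDeriv_eq {c₀ : ℝ} {f : ℝ → ℝ} (hf : TaylorCone c₀ f) (k : ℕ) :
    ∃ g : ℝ → ℝ, TaylorCone c₀ g ∧ ∀ x < c₀, iteratedDeriv k f x = g x := by
  induction k with
  | zero => exact ⟨f, hf, fun x _ => by simp⟩
  | succ k ih =>
      obtain ⟨g, hgc, hge⟩ := ih
      obtain ⟨h, hhc, hhp⟩ := hgc.derivMem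
      refine ⟨h, hhc, fun x hx => ?_⟩
      rw [iteratedDeriv_succ]
      have hev : iteratedDeriv k f =ᶠ[nhds x] g :=
        Filter.eventuallyEq_of_mem (Iio_mem_nhds hx) (fun y hy => hge y hy)
      rw [hev.deriv_eq]
      exact (hhp x hx).2

theorem TaylorCone.iteratedDeriv_nonneg {c₀ : ℝ} {f : ℝ → ℝ} (hf : TaylorCone c₀ f) (k : ℕ)
    {x : ℝ} (hx : x < c₀) : 0 ≤ iteratedDeriv k f x := by
  obtain ⟨g, hgc, hge⟩ := hf.iteratedDeriv_eq k
  rw [hge x hx]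
  exact hgc.nonneg x hx

theorem TaylorCone.pow {c₀ : ℝ} {f : ℝ → ℝ} (hf : TaylorCone c₀ f) (p : ℕ) :
    TaylorCone c₀ (f ^ p) := by
  induction p with
  | zero => rw [pow_zero]; exact TaylorCone.const (c₀ := c₀) (r := 1) zero_le_one
  | succ p ih => rw [pow_succ]; exact ih.mul hf

/-- with `ω(t) = (b-t)^s ∏_{k=1}^n (τ_k - t)^2`, the `m`-th partial sum
`Ω_m(t) = Σ_{ℓ=0}^m (t-a)^ℓ (1/ω)^{(ℓ)}(a)/ℓ!` of the Taylor expansion of `1/ω`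
at `a` is strictly positive on `[a,b]`. -/
theorem taylor_partial_sum_pos
    (n s : ℕ) (a b : ℝ) (hab : a < b)
    (τ : ℕ → ℝ)
    (hτab : ∀ j < n, τ j ∈ Set.Ioo a b)
    (hτmono : ∀ i j, i < j → j < n → τ i < τ j)
    (m : ℕ) (t : ℝ) (ht : t ∈ Set.Icc a b) :
    0 < ∑ ℓ ∈ Finset.range (m + 1),
        (t - a) ^ ℓ *
          iteratedDeriv ℓ (fun u => ((b - u) ^ s * ∏ k ∈ Finset.range n, (τ k - u) ^ 2)⁻¹) a
          / (ℓ.factorial : ℝ) := by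
  set F : ℝ → ℝ := fun u => ((b - u) ^ s * ∏ k ∈ Finset.range n, (τ k - u) ^ 2)⁻¹ with hF
  set c₀ : ℝ := if n = 0 then b else min b (τ 0) with hc₀
  have hc₀b : c₀ ≤ b := by
    rw [hc₀]; split
    · exact le_rfl
    · exact min_le_left _ _
  have hc₀a : a < c₀ := by
    rw [hc₀]; split
    · exact hab
    · next hn => exact lt_min hab (hτab 0 (Nat.pos_of_ne_zero hn)).1
  have hc₀τ : ∀ k < n, c₀ ≤ τ k := by
    intro k hk
    have hn : n ≠ 0 := by omega
    rw [hc₀, if_neg hn]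
    refine le_trans (min_le_right _ _) ?_
    rcases Nat.eq_zero_or_pos k with rfl | hk0
    · exact le_rfl
    · exact (hτmono 0 k hk0 hk).le
  have hFeq : F = (fun u => (b - u)⁻¹) ^ s *
      ∏ k ∈ Finset.range n, (fun u => (τ k - u)⁻¹) ^ 2 := by
    funext u
    simp only [hF, Pi.mul_apply, Pi.pow_apply, Finset.prod_apply, mul_inv,
      Finset.prod_inv_distrib, inv_pow]
  have hcone : TaylorCone c₀ F := by
    rw [hFeq]
    refine TaylorCone.mul ((TaylorCone.base hc₀b).pow s) ?_
    refine Finset.prod_induction _ _ (fun _ _ => TaylorCone.mul) ?_ ?_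
    · exact TaylorCone.const (r := 1) zero_le_one
    · intro k hk
      exact (TaylorCone.base (hc₀τ k (Finset.mem_range.mp hk))).pow 2
  have hta : 0 ≤ t - a := by linarith [ht.1]
  refine Finset.sum_pos' (fun i _ => ?_) ⟨0, Finset.mem_range.mpr (Nat.succ_pos m), ?_⟩
  · apply div_nonneg _ (by positivity)
    exact mul_nonneg (pow_nonneg hta i) (hcone.iteratedDeriv_nonneg i hc₀a)
  · have hFa : 0 < F a := by
      rw [hF]
      refine inv_pos.mpr (mul_pos (pow_pos (by linarith) s) (Finset.prod_pos fun k hk => ?_))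
      have := (hτab k (Finset.mem_range.mp hk)).1
      exact pow_pos (by linarith) 2
    simpa [iteratedDeriv_zero] using hFa
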